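/- Courant nodal domain theorem for graphs: let u_k be an eigenfunction of -L for the eigenvalue lambda_k (eigenvalues ordered 0 = lambda_0 < lambda_1 <= ... <= lambda_K). Delete from the graph all edges {x, y} with u_k(x) * u_k(y) < 0. Then the resulting graph has at most k + 1 connected components. -/

import Mathlib

open Finset

namespace Stmt18Aux

variable {V : Type*} [Fintype V] [DecidableEq V]

/-- weighted inner product -/
def wip (D : V → ℝ) (f g : V → ℝ) : ℝ := ∑ x, D x * f x * g x

lemma wip_comm (D f g) : wip (V := V) D f g = wip D g f := by
  unfold wip; exact Finset.sum_congr rfl fun x _ => by ring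

lemma wip_add_left (D f f' g) : wip (V := V) D (f + f') g = wip D f g + wip D f' g := by
  unfold wip; rw [← Finset.sum_add_distrib]
  exact Finset.sum_congr rfl fun x _ => by simp [Pi.add_apply]; ring

lemma wip_smul_left (D : V → ℝ) (r : ℝ) (f g) : wip (V := V) D (r • f) g = r * wip D f g := by
  unfold wip; rw [Finset.mul_sum]
  exact Finset.sum_congr rfl fun x _ => by simp [Pi.smul_apply, smul_eq_mul]; ring

lemma wip_sum_left {ι : Type*} (D : V → ℝ) (s : Finset ι) (F : ι → V → ℝ) (g : V → ℝ) :
    wip D (∑ i ∈ s, F i) g = ∑ i ∈ s, wip D (F i) g := by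
  classical
  induction s using Finset.induction with
  | empty => simp [wip]
  | insert _ _ h ih =>
      rw [Finset.sum_insert h, Finset.sum_insert h, wip_add_left, ih]

/-- spectral theorem packaged for our weighted setting -/
lemma spectral (D : V → ℝ) (hD : ∀ x, 0 < D x)
    (Lop : (V → ℝ) →ₗ[ℝ] (V → ℝ))
    (hsym : ∀ f g, wip D (Lop f) g = wip D f (Lop g)) :
    ∃ (ψ : Fin (Fintype.card V) → (V → ℝ)) (μ : Fin (Fintype.card V) → ℝ),
      (∀ i, Lop (ψ i) = μ i • ψ i) ∧
      (∀ i j, wip D (ψ i) (ψ j) = if i = j then 1 else 0) ∧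
      (∀ f : V → ℝ, f = ∑ i, wip D f (ψ i) • ψ i) ∧
      LinearIndependent ℝ ψ := by
  classical
  have hsq : ∀ x, Real.sqrt (D x) ≠ 0 := fun x =>
    ne_of_gt (Real.sqrt_pos.mpr (hD x))
  -- the linear equivalence to Euclidean space
  let e : (V → ℝ) ≃ₗ[ℝ] EuclideanSpace ℝ V :=
    { toFun := fun f => WithLp.toLp 2 (fun x => Real.sqrt (D x) * f x)
      invFun := fun f => fun x => f x / Real.sqrt (D x)
      map_add' := by intro f g; ext x; simp [mul_add]
      map_smul' := by
        intro r f; ext x; simp [mul_left_comm]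
      left_inv := by intro f; funext x; exact mul_div_cancel_left₀ _ (hsq x)
      right_inv := by intro f; ext x; show Real.sqrt (D x) * (f x / Real.sqrt (D x)) = f x; rw [mul_comm]; exact div_mul_cancel₀ _ (hsq x) }
  have he : ∀ f x, e f x = Real.sqrt (D x) * f x := fun f x => rfl
  have hip : ∀ f g : V → ℝ, (inner ℝ (e f) (e g) : ℝ) = wip D f g := by
    intro f g
    rw [PiLp.inner_apply]
    unfold wip
    refine Finset.sum_congr rfl fun x _ => ?_
    simp only [RCLike.inner_apply, conj_trivial, he]
    have h := Real.mul_self_sqrt (le_of_lt (hD x))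
    linear_combination (f x * g x) * h
  let T : Module.End ℝ (EuclideanSpace ℝ V) :=
    e.toLinearMap ∘ₗ Lop ∘ₗ e.symm.toLinearMap
  have hT : T.IsSymmetric := by
    intro f g
    show (inner ℝ (e (Lop (e.symm f))) g : ℝ) = inner ℝ f (e (Lop (e.symm g)))
    rw [← e.apply_symm_apply g, ← e.apply_symm_apply f]
    rw [e.symm_apply_apply, e.symm_apply_apply, hip, hip, hsym]
  have hn : Module.finrank ℝ (EuclideanSpace ℝ V) = Fintype.card V :=
    finrank_euclideanSpace
  let b := hT.eigenvectorBasis hn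
  let μ := hT.eigenvalues hn
  refine ⟨fun i => e.symm (b i), μ, ?_, ?_, ?_, ?_⟩
  · intro i
    have h1 : T (b i) = μ i • b i := hT.apply_eigenvectorBasis hn i
    have h2 : e.symm (T (b i)) = Lop (e.symm (b i)) := by
      have h3 : T (b i) = e (Lop (e.symm (b i))) := rfl
      rw [h3, e.symm_apply_apply]
    rw [← h2, h1, map_smul]
  · intro i j
    rw [← hip, e.apply_symm_apply, e.apply_symm_apply]
    have := orthonormal_iff_ite.mp b.orthonormal i j
    simpa using this
  · intro f
    have h1 : ∑ i, b.repr (e f) i • b i = e f := b.sum_repr (e f)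
    have h2 : ∀ i, b.repr (e f) i = wip D f (e.symm (b i)) := by
      intro i
      rw [b.repr_apply_apply, ← e.apply_symm_apply (b i), hip, e.apply_symm_apply, wip_comm]
    calc f = e.symm (e f) := (e.symm_apply_apply f).symm
      _ = e.symm (∑ i, b.repr (e f) i • b i) := by rw [h1]
      _ = ∑ i, b.repr (e f) i • e.symm (b i) := by rw [map_sum]; simp [map_smul]
      _ = ∑ i, wip D f (e.symm (b i)) • e.symm (b i) := by
            exact Finset.sum_congr rfl fun i _ => by rw [h2]
  · have hb : LinearIndependent ℝ (fun i => b i) := by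
      have := b.toBasis.linearIndependent
      simpa [OrthonormalBasis.coe_toBasis] using this
    have := hb.map' e.symm.toLinearMap e.symm.ker
    exact this


lemma card_filter_lt_le {n : ℕ} (f g : Fin n → ℝ) (c : ℝ)
    (h : ∀ t : ℝ, (Finset.univ.filter fun i => f i = t).card ≤
      (Finset.univ.filter fun i => g i = t).card) :
    (Finset.univ.filter fun i => f i < c).card ≤
      (Finset.univ.filter fun i => g i < c).card := by
  classical
  set T : Finset ℝ := ((Finset.univ.image f) ∪ (Finset.univ.image g)).filter (fun t => t < c)
    with hT
  have key : ∀ F : Fin n → ℝ, (∀ t ∈ (Finset.univ.image F), t ∈ Finset.univ.image f ∪ Finset.univ.image g) →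
      (Finset.univ.filter fun i => F i < c).card = ∑ t ∈ T, (Finset.univ.filter fun i => F i = t).card := by
    intro F hF
    rw [Finset.card_eq_sum_card_fiberwise (f := F) (t := T) ?mem]
    case mem =>
      intro x hx
      rw [Finset.mem_coe, Finset.mem_filter] at hx
      rw [Finset.mem_coe, hT, Finset.mem_filter]
      exact ⟨hF (F x) (Finset.mem_image_of_mem F (Finset.mem_univ x)), hx.2⟩
    refine Finset.sum_congr rfl fun t ht => ?_
    congr 1
    ext i
    simp only [Finset.mem_filter, Finset.mem_univ, true_and]
    have htc : t < c := (Finset.mem_filter.mp ht).2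
    constructor
    · rintro ⟨_, h2⟩; exact h2
    · rintro h2; exact ⟨h2 ▸ htc, h2⟩
  rw [key f (fun t ht => Finset.mem_union_left _ ht),
    key g (fun t ht => Finset.mem_union_right _ ht)]
  exact Finset.sum_le_sum fun t _ => h t

end Stmt18Aux


/-- Courant nodal domain theorem for graphs: let `lam : Fin |V| → ℝ` be the nondecreasing
enumeration (with multiplicity) of the eigenvalues of `-L` on a finite connected graph,
and let `u` be an eigenfunction for `lam k`. Deleting from the graph all edges `{x, y}`
with `u x * u y < 0` leaves at most `k + 1` connected components. -/
theorem stmt_18 {V : Type*} [Fintype V] [DecidableEq V] [Nonempty V]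
    (G : SimpleGraph V) [DecidableRel G.Adj] (hconn : G.Connected)
    (Lop : (V → ℝ) →ₗ[ℝ] (V → ℝ))
    (hLop : ∀ v x, Lop v x =
      v x - (1 / (G.degree x : ℝ)) * ∑ y ∈ G.neighborFinset x, v y)
    (lam : Fin (Fintype.card V) → ℝ) (hmono : Monotone lam)
    (hmult : ∀ μ : ℝ, (Finset.univ.filter (fun i => lam i = μ)).card =
      Module.finrank ℝ (Module.End.eigenspace Lop μ))
    (k : Fin (Fintype.card V)) (u : V → ℝ) (hu : u ≠ 0)
    (heig : Lop u = fun x => lam k * u x) :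
    ∀ G' : SimpleGraph V,
      (∀ x y, G'.Adj x y ↔ G.Adj x y ∧ ¬ (u x * u y < 0)) →
      Nat.card G'.ConnectedComponent ≤ (k : ℕ) + 1 := by
  classical
  intro G' hG'
  by_contra hcon
  push_neg at hcon
  haveI : Fintype G'.ConnectedComponent := Fintype.ofFinite _
  let c : V → G'.ConnectedComponent := G'.connectedComponentMk
  have hcsurj : Function.Surjective c := fun d => d.exists_rep
  have hkm : (k : ℕ) + 1 < Fintype.card G'.ConnectedComponent := by
    rwa [Nat.card_eq_fintype_card] at hcon
  have hmn : Fintype.card G'.ConnectedComponent ≤ Fintype.card V := Fintype.card_le_of_surjective c hcsurj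
  have h2n : 1 < Fintype.card V := lt_of_le_of_lt (Nat.le_add_left 1 k) (lt_of_lt_of_le hkm hmn)
  have hdeg : ∀ x : V, 0 < G.degree x := by
    intro x
    rw [G.degree_pos_iff_exists_adj]
    obtain ⟨y, hy⟩ := Fintype.exists_ne_of_one_lt_card h2n x
    obtain ⟨w⟩ := hconn.preconnected x y
    cases w with
    | nil => exact absurd rfl hy
    | cons h p => exact ⟨_, h⟩
  set D : V → ℝ := fun x => (G.degree x : ℝ) with hDdef
  have hD : ∀ x, 0 < D x := fun x => by
    rw [hDdef]
    show (0:ℝ) < (G.degree x : ℝ)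
    exact_mod_cast hdeg x
  have hDne : ∀ x, D x ≠ 0 := fun x => ne_of_gt (hD x)
  -- expansion of the weighted form of Lop
  have hLop' : ∀ f g : V → ℝ, Stmt18Aux.wip D (Lop f) g
      = (∑ x, D x * f x * g x) - ∑ x, ∑ y ∈ G.neighborFinset x, f y * g x := by
    intro f g
    unfold Stmt18Aux.wip
    rw [← Finset.sum_sub_distrib]
    refine Finset.sum_congr rfl fun x _ => ?_
    rw [hLop f x]
    have hS : (∑ y ∈ G.neighborFinset x, f y) * g x
        = ∑ y ∈ G.neighborFinset x, f y * g x := Finset.sum_mul _ _ _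
    rw [← hS]
    show D x * (f x - 1/(D x) * (∑ y ∈ G.neighborFinset x, f y)) * g x
        = D x * f x * g x - (∑ y ∈ G.neighborFinset x, f y) * g x
    field_simp [hDne x]
  have hswap : ∀ F : V → V → ℝ,
      (∑ x, ∑ y ∈ G.neighborFinset x, F x y) = ∑ x, ∑ y ∈ G.neighborFinset x, F y x := by
    intro F
    refine Finset.sum_comm' ?_
    intro x y
    simp only [Finset.mem_univ, true_and, and_true, SimpleGraph.mem_neighborFinset]
    exact G.adj_comm x y
  have hsym : ∀ f g, Stmt18Aux.wip D (Lop f) g = Stmt18Aux.wip D f (Lop g) := by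
    intro f g
    rw [hLop' f g, Stmt18Aux.wip_comm, hLop' g f]
    rw [hswap (fun x y => f y * g x)]
    congr 1
    · exact Finset.sum_congr rfl fun x _ => by ring
    · exact Finset.sum_congr rfl fun x _ => Finset.sum_congr rfl fun y _ => by ring
  obtain ⟨ψ, μ, hψeig, hψorth, hψexp, hψind⟩ := Stmt18Aux.spectral D hD Lop hsym
  -- pointwise eigen-equation
  have heig' : ∀ x, ∑ y ∈ G.neighborFinset x, u y = D x * ((1 - lam k) * u x) := by
    intro x
    have h1 := congrFun heig x
    rw [hLop u x] at h1
    have h1' : u x - (1:ℝ)/(D x) * (∑ y ∈ G.neighborFinset x, u y) = lam k * u x := h1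
    have h2 : (1:ℝ)/(D x) * (∑ y ∈ G.neighborFinset x, u y) = u x - lam k * u x := by
      linarith [h1']
    calc ∑ y ∈ G.neighborFinset x, u y
        = D x * ((1:ℝ)/(D x) * (∑ y ∈ G.neighborFinset x, u y)) := by
          rw [← mul_assoc, mul_one_div, div_self (hDne x), one_mul]
      _ = D x * (u x - lam k * u x) := by rw [h2]
      _ = D x * ((1 - lam k) * u x) := by ring
  -- multiplicity counting
  have hcount : ∀ t : ℝ, (Finset.univ.filter fun i => μ i = t).card ≤
      (Finset.univ.filter fun i => lam i = t).card := by
    intro t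
    rw [hmult t]
    have hfin : LinearIndependent ℝ (fun i : {i : Fin (Fintype.card V) // μ i = t} => ψ i.1) :=
      hψind.comp _ Subtype.val_injective
    let emb : {i : Fin (Fintype.card V) // μ i = t} → (Module.End.eigenspace Lop t) := fun i =>
      ⟨ψ i.1, by rw [Module.End.mem_eigenspace_iff, hψeig, i.2]⟩
    have hemb : LinearIndependent ℝ emb := by
      apply LinearIndependent.of_comp (Module.End.eigenspace Lop t).subtype
      exact hfin
    have hcard := hemb.fintype_card_le_finrank
    rwa [Fintype.card_subtype] at hcard
  have hSk : (Finset.univ.filter fun i => μ i < lam k).card ≤ (k : ℕ) := by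
    calc (Finset.univ.filter fun i => μ i < lam k).card
        ≤ (Finset.univ.filter fun i => lam i < lam k).card :=
          Stmt18Aux.card_filter_lt_le μ lam (lam k) hcount
      _ ≤ (Finset.Iio k).card := by
          refine Finset.card_le_card fun i hi => ?_
          simp only [Finset.mem_filter] at hi
          rw [Finset.mem_Iio]
          by_contra hle
          push_neg at hle
          exact absurd (hmono hle) (not_le.mpr hi.2)
      _ = (k : ℕ) := Fin.card_Iio k
  -- the linear maps
  let M1 : (G'.ConnectedComponent → ℝ) →ₗ[ℝ] (V → ℝ) :=
    { toFun := fun a => fun x => a (c x) * u x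
      map_add' := by intro a b; funext x; simp [add_mul]
      map_smul' := by intro r a; funext x; simp [mul_assoc]
      }
  let Bm : (V → ℝ) →ₗ[ℝ] ({i : Fin (Fintype.card V) // μ i < lam k} → ℝ) :=
    { toFun := fun v => fun j => Stmt18Aux.wip D v (ψ j.1)
      map_add' := by intro v w; funext j; exact Stmt18Aux.wip_add_left D v w (ψ j.1)
      map_smul' := by intro r v; funext j; exact Stmt18Aux.wip_smul_left D r v (ψ j.1)
      }
  let A := Bm.comp M1
  -- kernel is contained in the constants
  have hker : ∀ a : G'.ConnectedComponent → ℝ, A a = 0 →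
      ∃ r : ℝ, a = r • (fun _ => (1:ℝ)) := by
    intro a ha
    set v : V → ℝ := M1 a with hv
    have hva : ∀ x, v x = a (c x) * u x := fun x => rfl
    have hc0 : ∀ i : Fin (Fintype.card V), μ i < lam k → Stmt18Aux.wip D v (ψ i) = 0 := by
      intro i hi
      exact congrFun ha ⟨i, hi⟩
    set cf : Fin (Fintype.card V) → ℝ := fun i => Stmt18Aux.wip D v (ψ i) with hcf
    have hexp := hψexp v
    have hipL : Stmt18Aux.wip D (Lop v) v = ∑ i, μ i * (cf i * cf i) := by
      have hLv : Lop v = ∑ i, (cf i * μ i) • ψ i := by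
        conv_lhs => rw [hexp]
        rw [map_sum]
        exact Finset.sum_congr rfl fun i _ => by rw [map_smul, hψeig i, smul_smul]
      rw [hLv, Stmt18Aux.wip_sum_left]
      refine Finset.sum_congr rfl fun i _ => ?_
      rw [Stmt18Aux.wip_smul_left, Stmt18Aux.wip_comm D (ψ i) v]
      show (cf i * μ i) * cf i = μ i * (cf i * cf i)
      ring
    have hipv : Stmt18Aux.wip D v v = ∑ i, cf i * cf i := by
      have h0 : Stmt18Aux.wip D (∑ i, cf i • ψ i) v = Stmt18Aux.wip D v v := by
        rw [← hexp]
      rw [← h0, Stmt18Aux.wip_sum_left]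
      refine Finset.sum_congr rfl fun i _ => ?_
      rw [Stmt18Aux.wip_smul_left, Stmt18Aux.wip_comm D (ψ i) v]
    have hi1 : lam k * Stmt18Aux.wip D v v ≤ Stmt18Aux.wip D (Lop v) v := by
      rw [hipL, hipv, Finset.mul_sum]
      refine Finset.sum_le_sum fun i _ => ?_
      rcases lt_or_ge (μ i) (lam k) with h | h
      · have hz : cf i = 0 := hc0 i h
        simp [hz]
      · nlinarith [mul_self_nonneg (cf i)]
    -- the boundary sum
    set Nd : V → Finset V := fun x => (G.neighborFinset x).filter (fun y => ¬ c y = c x)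
      with hNd
    have hdel : ∀ x y, y ∈ Nd x → u x * u y < 0 := by
      intro x y hy
      rw [hNd, Finset.mem_filter, SimpleGraph.mem_neighborFinset] at hy
      by_contra hpos
      have hadj' : G'.Adj x y := (hG' x y).mpr ⟨hy.1, hpos⟩
      exact hy.2 (SimpleGraph.ConnectedComponent.sound hadj'.symm.reachable)
    have hx : ∀ x, D x * v x * v x - ∑ y ∈ G.neighborFinset x, v y * v x
        = lam k * (D x * v x * v x)
          + ∑ y ∈ Nd x, a (c x) * (a (c x) - a (c y)) * (u x * u y) := by
      intro x
      have hsplit : (∑ y ∈ (G.neighborFinset x).filter (fun y => c y = c x), v y * v x)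
          + ∑ y ∈ Nd x, v y * v x = ∑ y ∈ G.neighborFinset x, v y * v x :=
        Finset.sum_filter_add_sum_filter_not _ _ _
      have hNs : ∑ y ∈ (G.neighborFinset x).filter (fun y => c y = c x), v y * v x
          = a (c x) * a (c x) * u x
            * ∑ y ∈ (G.neighborFinset x).filter (fun y => c y = c x), u y := by
        rw [Finset.mul_sum]
        refine Finset.sum_congr rfl fun y hy => ?_
        have hcy : c y = c x := (Finset.mem_filter.mp hy).2
        rw [hva y, hva x, hcy]; ring
      have hsplit2 : (∑ y ∈ (G.neighborFinset x).filter (fun y => c y = c x), u y)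
          + ∑ y ∈ Nd x, u y = ∑ y ∈ G.neighborFinset x, u y :=
        Finset.sum_filter_add_sum_filter_not _ _ _
      have hNd2 : ∑ y ∈ Nd x, v y * v x = ∑ y ∈ Nd x, a (c y) * a (c x) * (u y * u x) :=
        Finset.sum_congr rfl fun y _ => by rw [hva y, hva x]; ring
      have hcomb : (∑ y ∈ Nd x, a (c y) * a (c x) * (u y * u x))
          + ∑ y ∈ Nd x, a (c x) * (a (c x) - a (c y)) * (u x * u y)
          = ∑ y ∈ Nd x, a (c x) * a (c x) * (u x * u y) := by
        rw [← Finset.sum_add_distrib]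
        exact Finset.sum_congr rfl fun y _ => by ring
      have hmulS : a (c x) * a (c x) * u x * (∑ y ∈ Nd x, u y)
          = ∑ y ∈ Nd x, a (c x) * a (c x) * (u x * u y) := by
        rw [Finset.mul_sum]
        exact Finset.sum_congr rfl fun y _ => by ring
      have hE := heig' x
      rw [← hsplit, hNs, hNd2, hva x]
      linear_combination (-(a (c x) * a (c x) * u x)) * hsplit2
        - (a (c x) * a (c x) * u x) * hE - hcomb + hmulS
    have hRtot : Stmt18Aux.wip D (Lop v) v = lam k * Stmt18Aux.wip D v v
        + ∑ x, ∑ y ∈ Nd x, a (c x) * (a (c x) - a (c y)) * (u x * u y) := by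
      rw [hLop' v v]
      have hw : Stmt18Aux.wip D v v = ∑ x, D x * v x * v x := rfl
      rw [hw]
      rw [← Finset.sum_sub_distrib]
      rw [Finset.sum_congr rfl fun x _ => hx x]
      rw [Finset.sum_add_distrib, Finset.mul_sum]
    have hR0 : 0 ≤ ∑ x, ∑ y ∈ Nd x, a (c x) * (a (c x) - a (c y)) * (u x * u y) := by
      linarith [hi1, hRtot]
    have hswapNd : (∑ x, ∑ y ∈ Nd x, a (c x) * (a (c x) - a (c y)) * (u x * u y))
        = ∑ x, ∑ y ∈ Nd x, a (c y) * (a (c y) - a (c x)) * (u y * u x) := by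
      refine Finset.sum_comm' ?_
      intro x y
      simp only [hNd, Finset.mem_univ, true_and, and_true, Finset.mem_filter,
        SimpleGraph.mem_neighborFinset]
      constructor
      · rintro ⟨h1, h2⟩; exact ⟨h1.symm, fun hh => h2 hh.symm⟩
      · rintro ⟨h1, h2⟩; exact ⟨h1.symm, fun hh => h2 hh.symm⟩
    have h2R : (∑ x, ∑ y ∈ Nd x, a (c x) * (a (c x) - a (c y)) * (u x * u y))
        + (∑ x, ∑ y ∈ Nd x, a (c y) * (a (c y) - a (c x)) * (u y * u x))
        = ∑ x, ∑ y ∈ Nd x, (a (c x) - a (c y))^2 * (u x * u y) := by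
      rw [← Finset.sum_add_distrib]
      refine Finset.sum_congr rfl fun x _ => ?_
      rw [← Finset.sum_add_distrib]
      exact Finset.sum_congr rfl fun y _ => by ring
    have hterm : ∀ x : V, ∀ y ∈ Nd x, (a (c x) - a (c y))^2 * (u x * u y) ≤ 0 := by
      intro x y hy
      nlinarith [sq_nonneg (a (c x) - a (c y)), hdel x y hy]
    have hsum0 : ∑ x, ∑ y ∈ Nd x, (a (c x) - a (c y))^2 * (u x * u y) = 0 := by
      refine le_antisymm ?_ ?_
      · exact Finset.sum_nonpos fun x _ => Finset.sum_nonpos fun y hy => hterm x y hy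
      · rw [← h2R]
        rw [← hswapNd]
        linarith [hR0]
    have hzero : ∀ x : V, ∀ y ∈ Nd x, (a (c x) - a (c y))^2 * (u x * u y) = 0 := by
      intro x y hy
      have hx0 := (Finset.sum_eq_zero_iff_of_nonpos
        (fun x' _ => Finset.sum_nonpos fun y' hy' => hterm x' y' hy')).mp hsum0 x
        (Finset.mem_univ x)
      exact (Finset.sum_eq_zero_iff_of_nonpos (fun y' hy' => hterm x y' hy')).mp hx0 y hy
    have hadj : ∀ x y : V, G.Adj x y → a (c x) = a (c y) := by
      intro x y hxy
      by_cases hc : c y = c x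
      · rw [hc]
      · have hy : y ∈ Nd x := by
          rw [hNd, Finset.mem_filter, SimpleGraph.mem_neighborFinset]
          exact ⟨hxy, hc⟩
        have h0 := hzero x y hy
        have hneg := hdel x y hy
        have hsq : (a (c x) - a (c y))^2 = 0 := by
          rcases mul_eq_zero.mp h0 with h | h
          · exact h
          · exact absurd h (ne_of_lt hneg)
        have := pow_eq_zero_iff (n := 2) (two_ne_zero) |>.mp hsq
        linarith [this]
    have hwalk : ∀ x y : V, G.Walk x y → a (c x) = a (c y) := by
      intro x y w
      induction w with
      | nil => rfl
      | cons h p ih => exact (hadj _ _ h).trans ih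
    have x0 : V := Classical.arbitrary V
    refine ⟨a (c x0), ?_⟩
    funext d
    obtain ⟨x, hxd⟩ := hcsurj d
    have hr := hwalk x0 x ((hconn.preconnected x0 x).some)
    rw [← hxd]
    show a (c x) = a (c x0) * 1
    rw [mul_one, hr]
  -- finish by dimension counting
  have hker' : LinearMap.ker A ≤ Submodule.span ℝ
      {(fun _ => (1:ℝ) : G'.ConnectedComponent → ℝ)} := by
    intro a ha
    obtain ⟨r, hr⟩ := hker a (LinearMap.mem_ker.mp ha)
    rw [hr]
    exact Submodule.smul_mem _ r (Submodule.subset_span rfl)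
  have hone : (fun _ => (1:ℝ) : G'.ConnectedComponent → ℝ) ≠ 0 := by
    intro h
    have h2 := congrFun h (c (Classical.arbitrary V))
    simpa using h2
  have hker1 : Module.finrank ℝ (LinearMap.ker A) ≤ 1 := by
    calc Module.finrank ℝ (LinearMap.ker A)
        ≤ Module.finrank ℝ (Submodule.span ℝ
            {(fun _ => (1:ℝ) : G'.ConnectedComponent → ℝ)}) := Submodule.finrank_mono hker'
      _ = 1 := finrank_span_singleton hone
  have hrange : Module.finrank ℝ (LinearMap.range A) ≤ (k : ℕ) := by
    calc Module.finrank ℝ (LinearMap.range A)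
        ≤ Module.finrank ℝ ({i : Fin (Fintype.card V) // μ i < lam k} → ℝ) :=
          Submodule.finrank_le (LinearMap.range A)
      _ = Fintype.card {i : Fin (Fintype.card V) // μ i < lam k} := Module.finrank_pi ℝ
      _ = (Finset.univ.filter fun i => μ i < lam k).card := Fintype.card_subtype _
      _ ≤ (k : ℕ) := hSk
  have hrn := LinearMap.finrank_range_add_finrank_ker A
  have hfi : Module.finrank ℝ (G'.ConnectedComponent → ℝ)
      = Fintype.card G'.ConnectedComponent := Module.finrank_pi ℝ
  rw [hfi] at hrn
  omega
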